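/- Let G be a nontrivial finite abelian group, n ≥ 1, and let (σ,ρ) and (τ,π) be double partitions of n satisfying |σ| = |τ|, σ ⊴ τ and ρ ⊴ π. Then (σ,ρ) ≽_G (τ,π). -/

import Mathlib

/-- The monoid hom `Perm (Fin n) →* MulAut (Fin n → G)`, permuting coordinates. -/
def permMulAut (G : Type*) [CommGroup G] (n : ℕ) :
    Equiv.Perm (Fin n) →* MulAut (Fin n → G) where
  toFun π := MulEquiv.arrowCongr π (MulEquiv.refl G)
  map_one' := by ext f a; rfl
  map_mul' := by intro π σ; ext f a; rfl

/-- The wreath product `G ≀ Sₙ`. -/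
abbrev Wr (G : Type*) [CommGroup G] (n : ℕ) :=
  SemidirectProduct (Fin n → G) (Equiv.Perm (Fin n)) (permMulAut G n)

/-- The natural action of `G ≀ Sₙ` on `G × [n]`. -/
def wAct {G : Type*} [CommGroup G] {n : ℕ} (w : Wr G n) (p : G × Fin n) : G × Fin n :=
  (p.1 * w.left (w.right p.2), w.right p.2)

/-- The `i`-th largest part of a multiset of naturals (0-indexed; `0` beyond the last part). -/
def dparts (s : Multiset ℕ) (i : ℕ) : ℕ := ((s.sort (· ≤ ·)).reverse).getD i 0

/-- `s` is dominated by `t`. -/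
def msDom (s t : Multiset ℕ) : Prop :=
  ∀ k, (((s.sort (· ≤ ·)).reverse).take k).sum ≤ (((t.sort (· ≤ ·)).reverse).take k).sum

/-- `T` is a `(σ,ρ)`-tabloid: the first component assigns to each element of `[n]` a block
(`Sum.inl i` is the block of the `i+1`-st largest part of `σ`, `Sum.inr j` that of `ρ`),
blocks have the prescribed sizes, and the colouring (second component)
is normalised to `1` on the `ρ`-blocks. -/
def IsTabloid (G : Type*) [CommGroup G] (n : ℕ) (σ ρ : Multiset ℕ)
    (T : (Fin n → ℕ ⊕ ℕ) × (Fin n → G)) : Prop :=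
  (∀ i, Nat.card {a : Fin n // T.1 a = Sum.inl i} = dparts σ i) ∧
  (∀ j, Nat.card {a : Fin n // T.1 a = Sum.inr j} = dparts ρ j) ∧
  (∀ a j, T.1 a = Sum.inr j → T.2 a = 1)

/-- The action of the wreath product on (raw) tabloids. -/
def tabAct {G : Type*} [CommGroup G] {n : ℕ} (w : Wr G n)
    (T : (Fin n → ℕ ⊕ ℕ) × (Fin n → G)) : (Fin n → ℕ ⊕ ℕ) × (Fin n → G) :=
  ⟨fun a => T.1 (w.right⁻¹ a),
   fun a => match T.1 (w.right⁻¹ a) with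
     | Sum.inl _ => T.2 (w.right⁻¹ a) * w.left a
     | Sum.inr _ => 1⟩

/-- A subset `Y` of `W` is transitive on `S ⊆ Ω` (w.r.t. an action `act`): there is a
constant `c > 0` such that any `a ∈ S` is mapped to any `b ∈ S` by exactly `c` elements of `Y`. -/
def IsTransitiveOn {W Ω : Type*} (act : W → Ω → Ω) (S : Set Ω) (Y : Set W) : Prop :=
  ∃ c : ℕ, 0 < c ∧ ∀ a ∈ S, ∀ b ∈ S, Nat.card {y : W // y ∈ Y ∧ act y a = b} = c

/-- `Y ⊆ G ≀ Sₙ` is `(σ,ρ)`-transitive. -/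
def DPTransitive (G : Type*) [CommGroup G] (n : ℕ) (σ ρ : Multiset ℕ)
    (Y : Set (Wr G n)) : Prop :=
  IsTransitiveOn tabAct {T | IsTabloid G n σ ρ T} Y

/-- `(σ,ρ) ≽_G (τ,π)` : every `(σ,ρ)`-transitive subset of `G ≀ Sₙ` is `(τ,π)`-transitive. -/
def DPDom (G : Type*) [CommGroup G] (n : ℕ) (σ ρ τ π : Multiset ℕ) : Prop :=
  ∀ Y : Set (Wr G n), DPTransitive G n σ ρ Y → DPTransitive G n τ π Y

/-- The partition obtained by adding `k` to the `r`-th largest part (1-indexed). -/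
def addPart (s : Multiset ℕ) (r k : ℕ) : Multiset ℕ :=
  s.erase (dparts s (r - 1)) + {dparts s (r - 1) + k}

/-! ### Auxiliary development -/

open Finset
open scoped Classical
set_option linter.unusedSectionVars false
set_option maxHeartbeats 1000000

section Aux

variable {G : Type} [CommGroup G] [Fintype G] {n : ℕ}

/-- raw tabloids -/
abbrev Tb (G : Type) [CommGroup G] (n : ℕ) := (Fin n → ℕ ⊕ ℕ) × (Fin n → G)

noncomputable instance : Fintype (Wr G n) :=
  Fintype.ofEquiv ((Fin n → G) × Equiv.Perm (Fin n))
    { toFun := fun p => ⟨p.1, p.2⟩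
      invFun := fun w => (w.left, w.right)
      left_inv := fun p => rfl
      right_inv := fun w => by cases w; rfl }

/-- normalised raw tabloid -/
def NormT (T : Tb G n) : Prop := ∀ a j, T.1 a = Sum.inr j → T.2 a = 1

lemma tabAct_mul (g h : Wr G n) (T : Tb G n) :
    tabAct (g * h) T = tabAct g (tabAct h T) := by
  have hr : (g * h).right = g.right * h.right := rfl
  have hl : ∀ a, (g * h).left a = g.left a * h.left (g.right⁻¹ a) := fun a => rfl
  refine Prod.ext (funext fun a => ?_) (funext fun a => ?_)
  · simp [tabAct, hr, mul_inv_rev]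
  · have hx : (g * h).right⁻¹ a = h.right⁻¹ (g.right⁻¹ a) := by
      simp [hr, mul_inv_rev]
    rcases hT : T.1 ((g * h).right⁻¹ a) with i | j
    · have hT' : T.1 (h.right⁻¹ (g.right⁻¹ a)) = Sum.inl i := by rw [← hx, hT]
      simp only [tabAct, hT, hT', hx, hl]
      rw [mul_comm (SemidirectProduct.left g a), mul_assoc]
    · have hT' : T.1 (h.right⁻¹ (g.right⁻¹ a)) = Sum.inr j := by rw [← hx, hT]
      simp only [tabAct, hT, hT', hx]

lemma tabAct_one (T : Tb G n) (hT : NormT T) : tabAct (1 : Wr G n) T = T := by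
  refine Prod.ext (funext fun a => ?_) (funext fun a => ?_)
  · simp [tabAct]
  · rcases hT1 : T.1 ((1 : Wr G n).right⁻¹ a) with i | j
    · have : (1 : Wr G n).right⁻¹ a = a := by simp
      rw [this] at hT1
      simp only [tabAct, this, hT1]
      simp
    · have h1 : (1 : Wr G n).right⁻¹ a = a := by simp
      rw [h1] at hT1
      simp only [tabAct, h1, hT1]
      exact (hT a j hT1).symm

lemma normT_tabAct (y : Wr G n) (T : Tb G n) : NormT (tabAct y T) := by
  intro a j h
  have h' : T.1 (y.right⁻¹ a) = Sum.inr j := h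
  simp only [tabAct, h']

lemma tabAct_cancel (y : Wr G n) (T : Tb G n) (hT : NormT T) :
    tabAct y⁻¹ (tabAct y T) = T := by
  rw [← tabAct_mul]
  simp [tabAct_one T hT]

lemma tabAct_cancel' (y : Wr G n) (T : Tb G n) (hT : NormT T) :
    tabAct y (tabAct y⁻¹ T) = T := by
  rw [← tabAct_mul]
  simp [tabAct_one T hT]


open Classical in
lemma natCard_eq_filter {α : Type*} [Fintype α] (p : α → Prop) :
    Nat.card {x // p x} = (univ.filter p).card := by
  classical
  rw [Nat.card_eq_fintype_card, Fintype.card_subtype]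

/-- number of cells of `f` labelled `w` -/
noncomputable def fshape (f : Fin n → ℕ ⊕ ℕ) (w : ℕ ⊕ ℕ) : ℕ :=
  (univ.filter (fun a => f a = w)).card

lemma fshape_eq_natCard (f : Fin n → ℕ ⊕ ℕ) (w : ℕ ⊕ ℕ) :
    Nat.card {a : Fin n // f a = w} = fshape f w := by
  classical
  rw [fshape, natCard_eq_filter]
  congr 1
  exact Finset.filter_congr_decidable _ _ _

/-- the set of `D`-tabloids -/
def TabSet (G : Type) [CommGroup G] (n : ℕ) (D : ℕ ⊕ ℕ → ℕ) : Set (Tb G n) :=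
  {T | (∀ w, Nat.card {a : Fin n // T.1 a = w} = D w) ∧ NormT T}

lemma isTabloid_iff (σ ρ : Multiset ℕ) (T : Tb G n) :
    IsTabloid G n σ ρ T ↔ T ∈ TabSet G n (Sum.elim (dparts σ) (dparts ρ)) := by
  constructor
  · rintro ⟨h1, h2, h3⟩
    refine ⟨fun w => ?_, h3⟩
    cases w with
    | inl i => simpa using h1 i
    | inr j => simpa using h2 j
  · rintro ⟨h, h3⟩
    exact ⟨fun i => by simpa using h (Sum.inl i),
           fun j => by simpa using h (Sum.inr j), h3⟩

lemma tabSet_shape {D : ℕ ⊕ ℕ → ℕ} {T : Tb G n} (hT : T ∈ TabSet G n D) (w : ℕ ⊕ ℕ) :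
    fshape T.1 w = D w := by
  rw [← fshape_eq_natCard]; exact hT.1 w

lemma fshape_tabAct (y : Wr G n) (T : Tb G n) (w : ℕ ⊕ ℕ) :
    fshape (tabAct y T).1 w = fshape T.1 w := by
  classical
  refine Finset.card_bij' (fun a _ => y.right⁻¹ a) (fun a _ => y.right a) ?_ ?_ ?_ ?_
  · intro a ha
    simp only [mem_filter, mem_univ, true_and] at ha ⊢
    exact ha
  · intro a ha
    simp only [mem_filter, mem_univ, true_and] at ha ⊢
    show T.1 (y.right⁻¹ (y.right a)) = w
    simpa using ha
  · intro a _; simp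
  · intro a _; simp

lemma tabSet_tabAct {D : ℕ ⊕ ℕ → ℕ} {T : Tb G n} (hT : T ∈ TabSet G n D) (y : Wr G n) :
    tabAct y T ∈ TabSet G n D := by
  refine ⟨fun w => ?_, normT_tabAct y T⟩
  rw [fshape_eq_natCard, fshape_tabAct, ← fshape_eq_natCard]
  exact hT.1 w

/-- `T` is obtained from `A` by moving one cell from block `u` to block `v`. -/
def MRel (u v : ℕ ⊕ ℕ) (A T : Tb G n) : Prop :=
  ∃ x, A.1 x = u ∧ T = (Function.update A.1 x v, A.2)

open Classical in
/-- the finset of all `T` with `MRel u v A T` -/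
noncomputable def mv (u v : ℕ ⊕ ℕ) (A : Tb G n) : Finset (Tb G n) :=
  (univ.filter (fun x => A.1 x = u)).image (fun x => (Function.update A.1 x v, A.2))

lemma mem_mv {u v : ℕ ⊕ ℕ} {A T : Tb G n} : T ∈ mv u v A ↔ MRel u v A T := by
  classical
  simp only [mv, Finset.mem_image, mem_filter, mem_univ, true_and, MRel]
  constructor
  · rintro ⟨x, hx, h⟩; exact ⟨x, hx, h.symm⟩
  · rintro ⟨x, hx, h⟩; exact ⟨x, hx, h.symm⟩

lemma card_mv {u v : ℕ ⊕ ℕ} (huv : u ≠ v) (A : Tb G n) :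
    (mv u v A).card = fshape A.1 u := by
  classical
  rw [mv]
  rw [Finset.card_image_of_injOn]
  · unfold fshape
    congr 1
  · intro x hx x' hx' h
    simp only [mem_coe, mem_filter, mem_univ, true_and] at hx hx'
    by_contra hne
    have h1 := congrFun (congrArg Prod.fst h) x
    simp only at h1
    rw [Function.update_self] at h1
    rw [Function.update_of_ne hne] at h1
    rw [hx] at h1
    exact huv h1.symm

lemma rel_symm_mp {u v : ℕ ⊕ ℕ} {C S : Tb G n} (h : MRel u v C S) : MRel v u S C := by
  obtain ⟨x, hx, rfl⟩ := h
  refine ⟨x, by simp, ?_⟩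
  refine Prod.ext ?_ rfl
  show C.1 = Function.update (Function.update C.1 x v) x u
  rw [Function.update_idem, ← hx, Function.update_eq_self]

lemma norm_rel {u v : ℕ ⊕ ℕ} {C S : Tb G n} (hside : u.isLeft = v.isLeft)
    (hN : NormT C) (h : MRel u v C S) : NormT S := by
  obtain ⟨x, hx, rfl⟩ := h
  intro a j ha
  by_cases hax : a = x
  · subst hax
    show C.2 a = 1
    have ha' : Function.update C.1 a v a = Sum.inr j := ha
    have hv : Function.update C.1 a v a = v := Function.update_self _ _ _
    rw [ha'] at hv
    rcases hu : u with i | i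
    · rw [hu] at hside; rw [← hv] at hside; simp at hside
    · exact hN a i (hx.trans hu)
  · show C.2 a = 1
    have ha' : Function.update C.1 x v a = Sum.inr j := ha
    have : Function.update C.1 x v a = C.1 a := Function.update_of_ne hax v C.1
    rw [ha'] at this
    exact hN a j this.symm


lemma rel_tabAct {u v : ℕ ⊕ ℕ} (hside : u.isLeft = v.isLeft) (y : Wr G n)
    {A T : Tb G n} (h : MRel u v A T) : MRel u v (tabAct y A) (tabAct y T) := by
  obtain ⟨x, hx, rfl⟩ := h
  refine ⟨y.right x, by simp [tabAct, hx], ?_⟩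
  refine Prod.ext (funext fun a => ?_) (funext fun a => ?_)
  · show Function.update A.1 x v (y.right⁻¹ a)
      = Function.update (fun b => A.1 (y.right⁻¹ b)) (y.right x) v a
    by_cases hax : a = y.right x
    · subst hax
      have hxx : y.right⁻¹ (y.right x) = x := Equiv.symm_apply_apply _ _
      rw [Function.update_self, hxx, Function.update_self]
    · have h2 : y.right⁻¹ a ≠ x := by
        intro hc
        exact hax (by rw [← hc]; simp)
      rw [Function.update_of_ne h2, Function.update_of_ne hax]
  · show (tabAct y (Function.update A.1 x v, A.2)).2 a = (tabAct y A).2 a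
    by_cases hax : y.right⁻¹ a = x
    · have e1 : (Function.update A.1 x v) (y.right⁻¹ a) = v := by rw [hax]; simp
      have e2 : A.1 (y.right⁻¹ a) = u := by rw [hax]; exact hx
      rcases u with i | i
      · rcases v with i' | i'
        · simp only [tabAct]
          rw [e1, e2]
        · simp at hside
      · rcases v with i' | i'
        · simp at hside
        · simp only [tabAct]
          rw [e1, e2]
    · have e1 : (Function.update A.1 x v) (y.right⁻¹ a) = A.1 (y.right⁻¹ a) :=
        Function.update_of_ne hax v A.1
      simp only [tabAct]
      rw [e1]

lemma fshape_update {f : Fin n → ℕ ⊕ ℕ} {x : Fin n} {u v : ℕ ⊕ ℕ}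
    (hfx : f x = u) (huv : u ≠ v) (w : ℕ ⊕ ℕ) :
    fshape (Function.update f x v) w
      = if w = v then fshape f w + 1 else (if w = u then fshape f w - 1 else fshape f w) := by
  classical
  have hfilt : (univ.filter (fun a => Function.update f x v a = w))
      = if w = v then insert x (univ.filter (fun a => f a = w))
        else (univ.filter (fun a => f a = w)).erase x := by
    ext a
    by_cases hax : a = x
    · subst hax
      by_cases hwv : w = v
      · simp [hwv, Function.update_self]
      · rw [if_neg hwv]
        simp [Function.update_self, (Ne.symm hwv : v ≠ w)]
    · by_cases hwv : w = v <;>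
        simp [Function.update_of_ne hax, hwv, hax]
  unfold fshape
  rw [hfilt]
  by_cases hwv : w = v
  · subst hwv
    rw [if_pos rfl, if_pos rfl, Finset.card_insert_of_notMem]
    simp [hfx, huv]
  · rw [if_neg hwv, if_neg hwv]
    by_cases hwu : w = u
    · subst hwu
      rw [if_pos rfl, Finset.card_erase_of_mem]
      simp [hfx]
    · rw [if_neg hwu, Finset.erase_eq_of_notMem]
      simp only [mem_filter, mem_univ, true_and, hfx]
      exact fun hc => hwu hc.symm

lemma fshape_pos {f : Fin n → ℕ ⊕ ℕ} {x : Fin n} {u : ℕ ⊕ ℕ} (hfx : f x = u) :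
    1 ≤ fshape f u := by
  classical
  refine Finset.card_pos.2 ⟨x, ?_⟩
  simp [fshape, hfx]

/-- moving a cell from `u` to `v` turns an `E`-tabloid into a tabloid of the modified shape. -/
lemma tab_rel {u v : ℕ ⊕ ℕ} (huv : u ≠ v) (hside : u.isLeft = v.isLeft)
    {E : ℕ ⊕ ℕ → ℕ} {A T : Tb G n} (hA : A ∈ TabSet G n E) (h : MRel u v A T) :
    T ∈ TabSet G n (Function.update (Function.update E u (E u - 1)) v (E v + 1)) := by
  obtain ⟨hA1, hA2⟩ := hA
  refine ⟨fun w => ?_, norm_rel hside hA2 h⟩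
  obtain ⟨x, hx, rfl⟩ := h
  rw [fshape_eq_natCard]
  show fshape (Function.update A.1 x v) w = _
  rw [fshape_update hx huv w]
  have hsh : ∀ w', fshape A.1 w' = E w' := tabSet_shape ⟨hA1, hA2⟩
  by_cases hwv : w = v
  · subst hwv
    rw [if_pos rfl, Function.update_self, hsh]
  · rw [if_neg hwv, Function.update_of_ne hwv]
    by_cases hwu : w = u
    · subst hwu
      rw [if_pos rfl, Function.update_self, hsh]
    · rw [if_neg hwu, Function.update_of_ne hwu, hsh]

lemma upd_roundtrip {D : ℕ ⊕ ℕ → ℕ} {u v : ℕ ⊕ ℕ} (huv : u ≠ v) (hDu : 1 ≤ D u) :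
    Function.update
      (Function.update (Function.update (Function.update D u (D u - 1)) v (D v + 1)) v
        (Function.update (Function.update D u (D u - 1)) v (D v + 1) v - 1)) u
      (Function.update (Function.update D u (D u - 1)) v (D v + 1) u + 1) = D := by
  funext w
  by_cases hwu : w = u
  · subst hwu
    rw [Function.update_self]
    rw [Function.update_of_ne huv, Function.update_self]
    omega
  · rw [Function.update_of_ne hwu]
    by_cases hwv : w = v
    · subst hwv
      rw [Function.update_self, Function.update_self]
      omega
    · rw [Function.update_of_ne hwv, Function.update_of_ne hwv, Function.update_of_ne hwu]

/-- structure of a common refinement of two distinct tabloids -/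
lemma inter_struct {u v : ℕ ⊕ ℕ} {A B S : Tb G n} (hAB : A ≠ B)
    (h1 : MRel u v A S) (h2 : MRel u v B S) :
    ∃ x y, x ≠ y ∧ A.1 x = u ∧ A.1 y = v ∧ B.1 x = v ∧ B.1 y = u ∧
      (∀ z, z ≠ x → z ≠ y → A.1 z = B.1 z) ∧ A.2 = B.2 ∧
      S = (Function.update A.1 x v, A.2) := by
  obtain ⟨x, hx, hSx⟩ := h1
  obtain ⟨y, hy, hSy⟩ := h2
  have hS2 : A.2 = B.2 := by
    have := congrArg Prod.snd hSx
    have h2 := congrArg Prod.snd hSy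
    simp at this h2
    rw [← this, ← h2]
  have hS1 : Function.update A.1 x v = Function.update B.1 y v := by
    have e1 := congrArg Prod.fst hSx
    have e2 := congrArg Prod.fst hSy
    simp at e1 e2
    rw [← e1, ← e2]
  have hxy : x ≠ y := by
    intro hc
    subst hc
    apply hAB
    refine Prod.ext ?_ hS2
    funext z
    by_cases hz : z = x
    · subst hz; rw [hx, hy]
    · have := congrFun hS1 z
      rwa [Function.update_of_ne hz, Function.update_of_ne hz] at this
  have hBx : B.1 x = v := by
    have := congrFun hS1 x
    rw [Function.update_self, Function.update_of_ne hxy] at this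
    exact this.symm
  have hAy : A.1 y = v := by
    have := congrFun hS1 y
    rwa [Function.update_of_ne (Ne.symm hxy), Function.update_self] at this
  refine ⟨x, y, hxy, hx, hAy, hBx, hy, ?_, hS2, hSx⟩
  intro z hzx hzy
  have := congrFun hS1 z
  rwa [Function.update_of_ne hzx, Function.update_of_ne hzy] at this

lemma inter_unique {u v : ℕ ⊕ ℕ} {A B S S' : Tb G n} (huv : u ≠ v) (hAB : A ≠ B)
    (h1 : MRel u v A S) (h2 : MRel u v B S)
    (h1' : MRel u v A S') (h2' : MRel u v B S') : S = S' := by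
  obtain ⟨x, y, hxy, hAx, hAy, hBx, hBy, hag, h2eq, hSeq⟩ := inter_struct hAB h1 h2
  obtain ⟨x', y', hxy', hAx', hAy', hBx', hBy', hag', h2eq', hSeq'⟩ := inter_struct hAB h1' h2'
  have hxx : x' = x := by
    by_contra hne
    by_cases hx'y : x' = y
    · subst hx'y
      exact huv (hAx'.symm.trans hAy)
    · have h := hag x' hne hx'y
      rw [hAx', hBx'] at h
      exact huv h
  subst hxx
  rw [hSeq, hSeq']

lemma inter_swap {u v : ℕ ⊕ ℕ} {A B S : Tb G n} (hAB : A ≠ B)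
    (h1 : MRel u v A S) (h2 : MRel u v B S) :
    ∃ S', MRel v u A S' ∧ MRel v u B S' := by
  obtain ⟨x, y, hxy, hAx, hAy, hBx, hBy, hag, h2eq, _⟩ := inter_struct hAB h1 h2
  refine ⟨(Function.update A.1 y u, A.2), ⟨y, hAy, rfl⟩, ⟨x, hBx, ?_⟩⟩
  refine Prod.ext ?_ h2eq
  show Function.update A.1 y u = Function.update B.1 x u
  funext z
  by_cases hzx : z = x
  · subst hzx
    rw [Function.update_of_ne hxy, Function.update_self, hAx]
  · by_cases hzy : z = y
    · subst hzy
      rw [Function.update_self, Function.update_of_ne (Ne.symm hxy), hBy]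
    · rw [Function.update_of_ne hzy, Function.update_of_ne hzx]
      exact hag z hzx hzy

lemma card_inter_swap {u v : ℕ ⊕ ℕ} (huv : u ≠ v) {A B : Tb G n} (hAB : A ≠ B) :
    (mv u v A ∩ mv u v B).card = (mv v u A ∩ mv v u B).card := by
  classical
  have hsub : ∀ (u' v' : ℕ ⊕ ℕ), u' ≠ v' → (mv u' v' A ∩ mv u' v' B).card ≤ 1 := by
    intro u' v' hne
    refine Finset.card_le_one.2 ?_
    intro S hS S' hS'
    rw [Finset.mem_inter, mem_mv, mem_mv] at hS hS'
    exact inter_unique hne hAB hS.1 hS.2 hS'.1 hS'.2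
  have hnonem : ∀ (u' v' : ℕ ⊕ ℕ), (mv u' v' A ∩ mv u' v' B).Nonempty →
      (mv v' u' A ∩ mv v' u' B).Nonempty := by
    rintro u' v' ⟨S, hS⟩
    rw [Finset.mem_inter, mem_mv, mem_mv] at hS
    obtain ⟨S', hS1, hS2⟩ := inter_swap hAB hS.1 hS.2
    exact ⟨S', Finset.mem_inter.2 ⟨mem_mv.2 hS1, mem_mv.2 hS2⟩⟩
  rcases Finset.eq_empty_or_nonempty (mv u v A ∩ mv u v B) with h | h
  · rw [h]
    rcases Finset.eq_empty_or_nonempty (mv v u A ∩ mv v u B) with h' | h'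
    · rw [h']
    · have := hnonem v u h'
      rw [h] at this
      exact absurd this (by simp)
  · have h' := hnonem u v h
    have c1 : (mv u v A ∩ mv u v B).card = 1 :=
      le_antisymm (hsub u v huv) (Finset.card_pos.2 h)
    have c2 : (mv v u A ∩ mv v u B).card = 1 :=
      le_antisymm (hsub v u (Ne.symm huv)) (Finset.card_pos.2 h')
    rw [c1, c2]

theorem step_lemma (L : Finset (ℕ ⊕ ℕ)) (D : (ℕ ⊕ ℕ) → ℕ) (u v : ℕ ⊕ ℕ)
    (huv : u ≠ v) (hside : u.isLeft = v.isLeft) (hvu : D v < D u)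
    (hDL : ∀ w, D w ≠ 0 → w ∈ L) (huL : u ∈ L) (hvL : v ∈ L)
    (Y : Set (Wr G n))
    (hY : IsTransitiveOn tabAct
      (TabSet G n (Function.update (Function.update D u (D u - 1)) v (D v + 1))) Y) :
    IsTransitiveOn tabAct (TabSet G n D) Y := by
  classical
  obtain ⟨c, hc0, hc⟩ := hY
  set Dsrc := Function.update (Function.update D u (D u - 1)) v (D v + 1) with hDsrc
  have hDu1 : 1 ≤ D u := Nat.lt_of_le_of_lt (Nat.zero_le _) hvu
  have hDsrcu : Dsrc u = D u - 1 := by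
    rw [hDsrc, Function.update_of_ne huv, Function.update_self]
  have hDsrcv : Dsrc v = D v + 1 := by rw [hDsrc, Function.update_self]
  have hround : Function.update (Function.update Dsrc v (Dsrc v - 1)) u (Dsrc u + 1) = D := by
    rw [hDsrc]; exact upd_roundtrip huv hDu1
  have hmvDsrc : ∀ {A T : Tb G n}, A ∈ TabSet G n D → MRel u v A T → T ∈ TabSet G n Dsrc := by
    intro A T hA h
    have := tab_rel huv hside hA h
    rwa [← hDsrc] at this
  have hmvD : ∀ {S C : Tb G n}, S ∈ TabSet G n Dsrc → MRel v u S C → C ∈ TabSet G n D := by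
    intro S C hS h
    have := tab_rel (Ne.symm huv) hside.symm hS h
    rwa [hround] at this
  have hcard_mvA : ∀ {A : Tb G n}, A ∈ TabSet G n D → (mv u v A).card = D u := by
    intro A hA; rw [card_mv huv, tabSet_shape hA]
  have hcard_mvS : ∀ {S : Tb G n}, S ∈ TabSet G n Dsrc → (mv v u S).card = D v + 1 := by
    intro S hS; rw [card_mv (Ne.symm huv), tabSet_shape hS, hDsrcv]
  set ΩA : Finset (Tb G n) :=
    (Fintype.piFinset (fun _ : Fin n => L)) ×ˢ (univ : Finset (Fin n → G)) with hΩA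
  have hamb : ∀ (D₀ : (ℕ ⊕ ℕ) → ℕ), (∀ w, D₀ w ≠ 0 → w ∈ L) →
      ∀ {T : Tb G n}, T ∈ TabSet G n D₀ → T ∈ ΩA := by
    intro D₀ hD₀ T hT
    rw [hΩA, Finset.mem_product]
    refine ⟨Fintype.mem_piFinset.2 fun i => ?_, Finset.mem_univ _⟩
    refine hD₀ _ ?_
    rw [← tabSet_shape hT (T.1 i)]
    have := fshape_pos (f := T.1) (x := i) rfl
    omega
  have hDsrcL : ∀ w, Dsrc w ≠ 0 → w ∈ L := by
    intro w hw
    by_cases hwu : w = u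
    · subst hwu; exact huL
    by_cases hwv : w = v
    · subst hwv; exact hvL
    refine hDL w ?_
    rwa [hDsrc, Function.update_of_ne hwv, Function.update_of_ne hwu] at hw
  set TF : Finset (Tb G n) := ΩA.filter (fun T => T ∈ TabSet G n D) with hTF
  have mem_TF : ∀ {T : Tb G n}, T ∈ TF ↔ T ∈ TabSet G n D := by
    intro T
    rw [hTF, Finset.mem_filter]
    exact ⟨fun h => h.2, fun h => ⟨hamb D hDL h, h⟩⟩
  set YF : Finset (Wr G n) := univ.filter (fun y => y ∈ Y) with hYF
  set NC : Tb G n → Tb G n → ℕ :=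
    fun T T' => (YF.filter (fun y => tabAct y T = T')).card with hNC
  have hNCcard : ∀ T T', Nat.card {y : Wr G n // y ∈ Y ∧ tabAct y T = T'} = NC T T' := by
    intro T T'
    rw [natCard_eq_filter]
    show _ = ((YF.filter (fun y => tabAct y T = T')).card)
    congr 1
    ext y
    simp only [Finset.mem_filter, Finset.mem_univ, true_and, hYF]
  have hcN : ∀ T ∈ TabSet G n Dsrc, ∀ T' ∈ TabSet G n Dsrc, NC T T' = c := by
    intro T hT T' hT'
    rw [← hNCcard]; exact hc T hT T' hT'
  set F : Tb G n → Tb G n → ℕ := fun A B => (mv u v A ∩ mv u v B).card with hF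
  -- the bijection lemma
  have hbij : ∀ (y : Wr G n) (A B : Tb G n), NormT A →
      ((mv u v A).filter (fun T => tabAct y T ∈ mv u v B)).card = F (tabAct y A) B := by
    intro y A B hA
    simp only [hF]
    refine Finset.card_bij' (fun T _ => tabAct y T) (fun S _ => tabAct y⁻¹ S) ?_ ?_ ?_ ?_
    · intro T hT
      rw [Finset.mem_filter] at hT
      rw [Finset.mem_inter]
      exact ⟨mem_mv.2 (rel_tabAct hside y (mem_mv.1 hT.1)), hT.2⟩
    · intro S hS
      rw [Finset.mem_inter] at hS
      obtain ⟨hS1, hS2⟩ := hS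
      have hrelyA : MRel u v (tabAct y A) S := mem_mv.1 hS1
      have hnS : NormT S := norm_rel hside (normT_tabAct y A) hrelyA
      have h1 : MRel u v A (tabAct y⁻¹ S) := by
        have := rel_tabAct hside y⁻¹ hrelyA
        rwa [tabAct_cancel y A hA] at this
      rw [Finset.mem_filter]
      refine ⟨mem_mv.2 h1, ?_⟩
      rwa [tabAct_cancel' y S hnS]
    · intro T hT
      rw [Finset.mem_filter] at hT
      exact tabAct_cancel y T (norm_rel hside hA (mem_mv.1 hT.1))
    · intro S hS
      rw [Finset.mem_inter] at hS
      exact tabAct_cancel' y S (norm_rel hside (normT_tabAct y A) (mem_mv.1 hS.1))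
  -- the master identity
  have keyE : ∀ A ∈ TabSet G n D, ∀ B ∈ TabSet G n D,
      ∑ C ∈ TF, NC A C * F C B = c * (D u * D u) := by
    intro A hA B hB
    have h1 : ∑ T ∈ mv u v A, ∑ T' ∈ mv u v B, NC T T' = c * (D u * D u) := by
      have e : ∀ T ∈ mv u v A, ∑ T' ∈ mv u v B, NC T T' = D u * c := by
        intro T hT
        have hTm := hmvDsrc hA (mem_mv.1 hT)
        rw [Finset.sum_congr rfl
          (fun T' hT' => hcN T hTm T' (hmvDsrc hB (mem_mv.1 hT')))]
        rw [Finset.sum_const, hcard_mvA hB, smul_eq_mul]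
      rw [Finset.sum_congr rfl e, Finset.sum_const, hcard_mvA hA, smul_eq_mul]
      ring
    have h2 : ∑ T ∈ mv u v A, ∑ T' ∈ mv u v B, NC T T' = ∑ y ∈ YF, F (tabAct y A) B := by
      have e1 : ∀ (T T' : Tb G n), NC T T' = ∑ y ∈ YF, if tabAct y T = T' then 1 else 0 := by
        intro T T'
        simp only [hNC]
        rw [Finset.card_filter]
      calc ∑ T ∈ mv u v A, ∑ T' ∈ mv u v B, NC T T'
          = ∑ T ∈ mv u v A, ∑ y ∈ YF, ∑ T' ∈ mv u v B,
              (if tabAct y T = T' then 1 else 0) := by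
            refine Finset.sum_congr rfl fun T _ => ?_
            rw [Finset.sum_congr rfl fun T' _ => e1 T T']
            exact Finset.sum_comm
        _ = ∑ y ∈ YF, ∑ T ∈ mv u v A, ∑ T' ∈ mv u v B,
              (if tabAct y T = T' then 1 else 0) := Finset.sum_comm
        _ = ∑ y ∈ YF, F (tabAct y A) B := by
            refine Finset.sum_congr rfl fun y _ => ?_
            rw [Finset.sum_congr rfl
              (fun T _ => Finset.sum_ite_eq (mv u v B) (tabAct y T) (fun _ => 1))]
            rw [← Finset.card_filter]
            exact hbij y A B hA.2
    have h3 : ∑ y ∈ YF, F (tabAct y A) B = ∑ C ∈ TF, NC A C * F C B := by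
      have hmaps : ∀ y ∈ YF, tabAct y A ∈ TF := fun y _ => mem_TF.2 (tabSet_tabAct hA y)
      rw [← Finset.sum_fiberwise_of_maps_to hmaps (fun y => F (tabAct y A) B)]
      refine Finset.sum_congr rfl fun C hC => ?_
      have e : ∀ y ∈ YF.filter (fun y => tabAct y A = C), F (tabAct y A) B = F C B := by
        intro y hy
        rw [(Finset.mem_filter.1 hy).2]
      rw [Finset.sum_congr rfl e, Finset.sum_const, smul_eq_mul]
    rw [← h3, ← h2, h1]
  -- row sums
  have keyRow : ∀ B ∈ TabSet G n D, ∑ C ∈ TF, F C B = D u * (D v + 1) := by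
    intro B hB
    have e1 : ∀ C : Tb G n, F C B = ∑ S ∈ mv u v B, if S ∈ mv u v C then 1 else 0 := by
      intro C
      simp only [hF]
      rw [Finset.inter_comm, ← Finset.filter_mem_eq_inter, Finset.card_filter]
    rw [Finset.sum_congr rfl (fun C _ => e1 C), Finset.sum_comm]
    have e2 : ∀ S ∈ mv u v B, ∑ C ∈ TF, (if S ∈ mv u v C then 1 else 0) = D v + 1 := by
      intro S hS
      have hSm : S ∈ TabSet G n Dsrc := hmvDsrc hB (mem_mv.1 hS)
      have efil : TF.filter (fun C => S ∈ mv u v C) = mv v u S := by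
        ext C
        rw [Finset.mem_filter, mem_mv]
        constructor
        · rintro ⟨_, h⟩
          exact mem_mv.2 (rel_symm_mp h)
        · intro h
          have hrel := mem_mv.1 h
          exact ⟨mem_TF.2 (hmvD hSm hrel), rel_symm_mp hrel⟩
      rw [← Finset.card_filter, efil, hcard_mvS hSm]
    rw [Finset.sum_congr rfl e2, Finset.sum_const, hcard_mvA hB, smul_eq_mul]
  -- quadratic positivity
  have keyQ : ∀ (u' v' : ℕ ⊕ ℕ) (w : Tb G n → ℤ),
      0 ≤ ∑ B ∈ TF, ∑ C ∈ TF, ((mv u' v' B ∩ mv u' v' C).card : ℤ) * (w B * w C) := by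
    intro u' v' w
    set big := TF.biUnion (fun B => mv u' v' B) with hbig
    have e0 : ∀ B ∈ TF, ∀ C ∈ TF, ((mv u' v' B ∩ mv u' v' C).card : ℤ) * (w B * w C)
        = ∑ S ∈ big, (if S ∈ mv u' v' B then w B else 0) *
            (if S ∈ mv u' v' C then w C else 0) := by
      intro B hB C hC
      have hsub : mv u' v' B ∩ mv u' v' C ⊆ big :=
        subset_trans Finset.inter_subset_left (Finset.subset_biUnion_of_mem _ hB)
      have e1 : ∀ S : Tb G n, (if S ∈ mv u' v' B then w B else 0) *
          (if S ∈ mv u' v' C then w C else 0)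
          = if S ∈ mv u' v' B ∩ mv u' v' C then w B * w C else 0 := by
        intro S
        by_cases h1 : S ∈ mv u' v' B <;> by_cases h2 : S ∈ mv u' v' C <;>
          simp [h1, h2, Finset.mem_inter]
      rw [Finset.sum_congr rfl (fun S _ => e1 S)]
      rw [Finset.sum_ite_mem, Finset.inter_eq_right.2 hsub, Finset.sum_const, nsmul_eq_mul]
    have main : ∑ B ∈ TF, ∑ C ∈ TF, ((mv u' v' B ∩ mv u' v' C).card : ℤ) * (w B * w C)
        = ∑ S ∈ big, (∑ B ∈ TF, (if S ∈ mv u' v' B then w B else 0)) *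
            (∑ C ∈ TF, (if S ∈ mv u' v' C then w C else 0)) := by
      calc ∑ B ∈ TF, ∑ C ∈ TF, ((mv u' v' B ∩ mv u' v' C).card : ℤ) * (w B * w C)
          = ∑ B ∈ TF, ∑ C ∈ TF, ∑ S ∈ big, (if S ∈ mv u' v' B then w B else 0) *
              (if S ∈ mv u' v' C then w C else 0) :=
            Finset.sum_congr rfl fun B hB => Finset.sum_congr rfl fun C hC => e0 B hB C hC
        _ = ∑ B ∈ TF, ∑ S ∈ big, ∑ C ∈ TF, (if S ∈ mv u' v' B then w B else 0) *
              (if S ∈ mv u' v' C then w C else 0) :=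
            Finset.sum_congr rfl fun B _ => Finset.sum_comm
        _ = ∑ S ∈ big, ∑ B ∈ TF, ∑ C ∈ TF, (if S ∈ mv u' v' B then w B else 0) *
              (if S ∈ mv u' v' C then w C else 0) := Finset.sum_comm
        _ = ∑ S ∈ big, (∑ B ∈ TF, (if S ∈ mv u' v' B then w B else 0)) *
            (∑ C ∈ TF, (if S ∈ mv u' v' C then w C else 0)) := by
            refine Finset.sum_congr rfl fun S _ => ?_
            rw [Finset.sum_mul_sum]
    rw [main]
    exact Finset.sum_nonneg fun S _ => mul_self_nonneg _
  -- diagonal values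
  have keyDiagF : ∀ B ∈ TabSet G n D, F B B = D u := by
    intro B hB
    simp only [hF]
    rw [Finset.inter_self, hcard_mvA hB]
  have keyDiagH : ∀ B ∈ TabSet G n D, (mv v u B ∩ mv v u B).card = D v := by
    intro B hB
    rw [Finset.inter_self, card_mv (Ne.symm huv), tabSet_shape hB]
  -- main argument
  by_cases hex : ∃ A₀ : Tb G n, A₀ ∈ TabSet G n D
  case neg =>
    exact ⟨1, Nat.one_pos, fun A hA => absurd ⟨A, hA⟩ hex⟩
  obtain ⟨A₀, hA₀⟩ := hex
  have hconst : ∀ A ∈ TabSet G n D, ∀ B ∈ TabSet G n D,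
      (D v + 1) * NC A B = c * D u := by
    intro A hA B hB
    set w : Tb G n → ℤ :=
      fun C => ((D v : ℤ) + 1) * (NC A C : ℤ) - (c : ℤ) * (D u : ℤ) with hw
    have hrow0 : ∀ B' ∈ TF, ∑ C ∈ TF, (F C B' : ℤ) * w C = 0 := by
      intro B' hB'
      have hB'' := mem_TF.1 hB'
      have eE : (∑ C ∈ TF, (NC A C : ℤ) * (F C B' : ℤ)) = (c : ℤ) * ((D u : ℤ) * (D u : ℤ)) := by
        exact_mod_cast keyE A hA B' hB''
      have eR : (∑ C ∈ TF, (F C B' : ℤ)) = (D u : ℤ) * ((D v : ℤ) + 1) := by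
        exact_mod_cast keyRow B' hB''
      calc ∑ C ∈ TF, (F C B' : ℤ) * w C
          = ((D v : ℤ) + 1) * (∑ C ∈ TF, (NC A C : ℤ) * (F C B' : ℤ))
            - ((c : ℤ) * (D u : ℤ)) * (∑ C ∈ TF, (F C B' : ℤ)) := by
            rw [Finset.mul_sum, Finset.mul_sum, ← Finset.sum_sub_distrib]
            refine Finset.sum_congr rfl fun C _ => ?_
            simp only [hw]
            ring
        _ = 0 := by rw [eE, eR]; ring
    have hsplit : ∑ B' ∈ TF, ∑ C ∈ TF, (F B' C : ℤ) * (w B' * w C)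
        = (∑ B' ∈ TF, ∑ C ∈ TF, ((mv v u B' ∩ mv v u C).card : ℤ) * (w B' * w C))
          + ((D u : ℤ) - (D v : ℤ)) * ∑ B' ∈ TF, w B' * w B' := by
      have point : ∀ B' ∈ TF, ∑ C ∈ TF, (F B' C : ℤ) * (w B' * w C)
          = (∑ C ∈ TF, ((mv v u B' ∩ mv v u C).card : ℤ) * (w B' * w C))
            + ((D u : ℤ) - (D v : ℤ)) * (w B' * w B') := by
        intro B' hB'
        have hBm := mem_TF.1 hB'
        rw [← Finset.sum_erase_add TF _ hB',
          ← Finset.sum_erase_add TF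
            (fun C => ((mv v u B' ∩ mv v u C).card : ℤ) * (w B' * w C)) hB']
        have hoff : ∀ C ∈ TF.erase B', (F B' C : ℤ) * (w B' * w C)
            = ((mv v u B' ∩ mv v u C).card : ℤ) * (w B' * w C) := by
          intro C hC
          have hne : B' ≠ C := fun h => (Finset.mem_erase.1 hC).1 h.symm
          simp only [hF]
          rw [card_inter_swap huv hne]
        rw [Finset.sum_congr rfl hoff, keyDiagF B' hBm, keyDiagH B' hBm]
        push_cast
        ring
      rw [Finset.sum_congr rfl point, Finset.sum_add_distrib, Finset.mul_sum]
    have hFww : ∑ B' ∈ TF, ∑ C ∈ TF, (F B' C : ℤ) * (w B' * w C) = 0 := by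
      have e : ∀ B' ∈ TF, ∑ C ∈ TF, (F B' C : ℤ) * (w B' * w C)
          = w B' * ∑ C ∈ TF, (F C B' : ℤ) * w C := by
        intro B' hB'
        rw [Finset.mul_sum]
        refine Finset.sum_congr rfl fun C hC => ?_
        have hsym : F B' C = F C B' := by simp only [hF]; rw [Finset.inter_comm]
        rw [hsym]
        ring
      rw [Finset.sum_congr rfl e]
      exact Finset.sum_eq_zero fun B' hB' => by rw [hrow0 B' hB', mul_zero]
    have hQH := keyQ v u w
    have hab : (1 : ℤ) ≤ (D u : ℤ) - (D v : ℤ) := by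
      have : D v + 1 ≤ D u := hvu
      omega
    have hnn : (0:ℤ) ≤ ∑ B' ∈ TF, w B' * w B' :=
      Finset.sum_nonneg fun B' _ => mul_self_nonneg _
    have hSumSq : ∑ B' ∈ TF, w B' * w B' = 0 := by
      nlinarith [hQH, hsplit, hFww, hnn, hab]
    have hzero : w B = 0 := by
      have hBf : B ∈ TF := mem_TF.2 hB
      have := (Finset.sum_eq_zero_iff_of_nonneg
        (fun B' _ => mul_self_nonneg (w B'))).1 hSumSq B hBf
      exact mul_self_eq_zero.1 this
    simp only [hw, sub_eq_zero] at hzero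
    exact_mod_cast hzero
  have hkey : ∀ A ∈ TabSet G n D, ∀ B ∈ TabSet G n D, NC A B = NC A₀ A₀ := by
    intro A hA B hB
    have h1 := hconst A hA B hB
    have h2 := hconst A₀ hA₀ A₀ hA₀
    refine Nat.eq_of_mul_eq_mul_left (Nat.succ_pos (D v)) ?_
    rw [h1, ← h2]
  have hc'pos : 0 < NC A₀ A₀ := by
    have h2 := hconst A₀ hA₀ A₀ hA₀
    have hpos : 0 < c * D u := Nat.mul_pos hc0 (lt_of_le_of_lt (Nat.zero_le _) hvu)
    rcases Nat.eq_zero_or_pos (NC A₀ A₀) with h | h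
    · rw [h, Nat.mul_zero] at h2
      omega
    · exact h
  refine ⟨NC A₀ A₀, hc'pos, fun A hA B hB => ?_⟩
  rw [hNCcard A B]
  exact hkey A hA B hB

/-! ### Chains of single-box moves -/

def psum (d : ℕ → ℕ) (k : ℕ) : ℕ := ∑ t ∈ Finset.range k, d t

lemma psum_succ (d : ℕ → ℕ) (k : ℕ) : psum d (k+1) = psum d k + d k :=
  Finset.sum_range_succ d k

lemma exists_move (N : ℕ) (d d' : ℕ → ℕ) (hant : Antitone d) (hd'ant : Antitone d')
    (hsupp : ∀ k, N ≤ k → d k = 0) (hd'supp : ∀ k, N ≤ k → d' k = 0)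
    (hdom : ∀ k, psum d k ≤ psum d' k) (hNeq : psum d N = psum d' N)
    (hdd : d ≠ d') :
    ∃ i j d₁, i < j ∧ j < N ∧ 1 ≤ d j ∧ d j ≤ d i + 1 ∧
      d₁ = Function.update (Function.update d i (d i + 1)) j (d j - 1) ∧
      Antitone d₁ ∧ (∀ k, N ≤ k → d₁ k = 0) ∧
      (∀ k, psum d₁ k ≤ psum d' k) ∧ psum d₁ N = psum d' N ∧
      (∑ k ∈ Finset.range N, (psum d' (k+1) - psum d₁ (k+1)))
        < ∑ k ∈ Finset.range N, (psum d' (k+1) - psum d (k+1)) := by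
  classical
  have hex : ∃ k, d k ≠ d' k := by
    by_contra h
    push_neg at h
    exact hdd (funext h)
  set i := Nat.find hex with hi
  have hine : d i ≠ d' i := Nat.find_spec hex
  have himin : ∀ k, k < i → d k = d' k := by
    intro k hk
    have := Nat.find_min hex hk
    tauto
  have hpsum_eq_below : ∀ k, k ≤ i → psum d k = psum d' k := by
    intro k hk
    exact Finset.sum_congr rfl fun t ht =>
      himin t (lt_of_lt_of_le (Finset.mem_range.1 ht) hk)
  have hdi : d i < d' i := by
    have h1 := hdom (i+1)
    rw [psum_succ, psum_succ, hpsum_eq_below i le_rfl] at h1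
    omega
  have hiN : i < N := by
    by_contra h
    push_neg at h
    rw [hsupp i h, hd'supp i h] at hine
    exact hine rfl
  have hexj : ∃ k, i < k ∧ psum d (k+1) = psum d' (k+1) :=
    ⟨N, hiN, by rw [psum_succ, psum_succ, hsupp N le_rfl, hd'supp N le_rfl, hNeq]⟩
  set j := Nat.find hexj with hj
  obtain ⟨hij, hjeq⟩ : i < j ∧ psum d (j+1) = psum d' (j+1) := Nat.find_spec hexj
  have hstrict : ∀ k, i ≤ k → k < j → psum d (k+1) < psum d' (k+1) := by
    intro k hik hkj
    rcases eq_or_lt_of_le hik with rfl | hlt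
    · rw [psum_succ, psum_succ, hpsum_eq_below i le_rfl]
      omega
    · have h1 := Nat.find_min hexj hkj
      have h2 := hdom (k+1)
      have h3 : ¬ (psum d (k+1) = psum d' (k+1)) := fun heq => h1 ⟨hlt, heq⟩
      omega
  have hdj : d' j < d j := by
    have h1 : psum d j < psum d' j := by
      have h := hstrict (j-1) (by omega) (by omega)
      have hjj : j - 1 + 1 = j := by omega
      rwa [hjj] at h
    have h2 : psum d j + d j = psum d' j + d' j := by
      rw [← psum_succ, ← psum_succ, hjeq]
    omega
  have hjN : j < N := by
    by_contra h
    push_neg at h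
    have := hsupp j h
    omega
  have hd1j : 1 ≤ d j := by omega
  have hdji : d j ≤ d i + 1 := by
    have := hant (le_of_lt hij)
    omega
  set d₁ := Function.update (Function.update d i (d i + 1)) j (d j - 1) with hd₁
  have hd₁i : d₁ i = d i + 1 := by
    rw [hd₁, Function.update_of_ne (by omega : i ≠ j), Function.update_self]
  have hd₁j : d₁ j = d j - 1 := by rw [hd₁, Function.update_self]
  have hd₁k : ∀ k, k ≠ i → k ≠ j → d₁ k = d k := by
    intro k hki hkj
    rw [hd₁, Function.update_of_ne hkj, Function.update_of_ne hki]
  have pa : ∀ k, k ≤ i → psum d₁ k = psum d k := by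
    intro k hk
    refine Finset.sum_congr rfl fun t ht => ?_
    have htr := Finset.mem_range.1 ht
    exact hd₁k t (by omega) (by omega)
  have pb : ∀ k, i < k → k ≤ j → psum d₁ k = psum d k + 1 := by
    intro k hik hkj
    have hmem : i ∈ Finset.range k := Finset.mem_range.2 hik
    have h1 : psum d₁ k = ∑ t ∈ Finset.range k, Function.update d i (d i + 1) t := by
      refine Finset.sum_congr rfl fun t ht => ?_
      have htr := Finset.mem_range.1 ht
      rw [hd₁, Function.update_of_ne (by omega : t ≠ j)]
    have h2 : psum d k = d i + ∑ t ∈ (Finset.range k).erase i, d t :=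
      (Finset.add_sum_erase _ d hmem).symm
    rw [h1, Finset.sum_update_of_mem hmem, Finset.sdiff_singleton_eq_erase, h2]
    omega
  have pc : ∀ k, j < k → psum d₁ k = psum d k := by
    intro k hjk
    have hmemj : j ∈ Finset.range k := Finset.mem_range.2 hjk
    have hmemi : i ∈ (Finset.range k).erase j :=
      Finset.mem_erase.2 ⟨by omega, Finset.mem_range.2 (by omega)⟩
    have h1 : psum d₁ k = (d j - 1) +
        ∑ t ∈ (Finset.range k).erase j, Function.update d i (d i + 1) t := by
      show ∑ t ∈ Finset.range k, d₁ t = _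
      rw [hd₁]
      rw [Finset.sum_update_of_mem hmemj, Finset.sdiff_singleton_eq_erase]
    have h2 : psum d k = d j + ∑ t ∈ (Finset.range k).erase j, d t :=
      (Finset.add_sum_erase _ d hmemj).symm
    have h3 : ∑ t ∈ (Finset.range k).erase j, d t
        = d i + ∑ t ∈ ((Finset.range k).erase j).erase i, d t :=
      (Finset.add_sum_erase _ d hmemi).symm
    rw [h1, Finset.sum_update_of_mem hmemi, Finset.sdiff_singleton_eq_erase, h2, h3]
    omega
  have hant1 : Antitone d₁ := by
    refine antitone_nat_of_succ_le ?_
    intro k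
    by_cases hk1 : k + 1 = i
    · rw [hk1, hd₁i, hd₁k k (by omega) (by omega)]
      have e1 := himin k (by omega)
      have e2 : d' i ≤ d' k := hd'ant (by omega)
      omega
    by_cases hk0 : k = i
    · by_cases h2 : k + 1 = j
      · rw [h2, hd₁j, hk0, hd₁i]
        omega
      · rw [hd₁k (k+1) (by omega) h2]
        conv_rhs => rw [hk0, hd₁i]
        have e : d (k+1) ≤ d k := hant (Nat.le_succ k)
        have e2 : d k = d i := by rw [hk0]
        omega
    by_cases hk2 : k + 1 = j
    · rw [hk2, hd₁j, hd₁k k hk0 (by omega)]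
      have : d j ≤ d k := hant (by omega)
      omega
    by_cases hk3 : k = j
    · rw [hd₁k (k+1) (by omega) (by omega), hk3, hd₁j]
      have hle : d (j+1) ≤ d j := hant (Nat.le_succ j)
      by_cases heq : d (j+1) = d j
      · exfalso
        have h1 := psum_succ d (j+1)
        have h2 := hdom (j+1+1)
        have h3 := psum_succ d' (j+1)
        have h4 : d' (j+1) ≤ d' j := hd'ant (Nat.le_succ j)
        omega
      · omega
    · rw [hd₁k (k+1) hk1 hk2, hd₁k k hk0 hk3]
      exact hant (Nat.le_succ k)
  have hsupp1 : ∀ k, N ≤ k → d₁ k = 0 := by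
    intro k hk
    rw [hd₁k k (by omega) (by omega)]
    exact hsupp k hk
  have hdom1 : ∀ k, psum d₁ k ≤ psum d' k := by
    intro k
    rcases le_or_gt k i with h | h
    · rw [pa k h]; exact hdom k
    rcases le_or_gt k j with h2 | h2
    · rw [pb k h h2]
      have h3 := hstrict (k-1) (by omega) (by omega)
      have hkk : k - 1 + 1 = k := by omega
      rw [hkk] at h3
      omega
    · rw [pc k h2]; exact hdom k
  have hNeq1 : psum d₁ N = psum d' N := by
    rw [pc N (by omega)]
    exact hNeq
  have hlt : (∑ k ∈ Finset.range N, (psum d' (k+1) - psum d₁ (k+1)))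
      < ∑ k ∈ Finset.range N, (psum d' (k+1) - psum d (k+1)) := by
    refine Finset.sum_lt_sum (fun k _ => ?_) ⟨i, Finset.mem_range.2 hiN, ?_⟩
    · have h5 : psum d (k+1) ≤ psum d₁ (k+1) := by
        rcases le_or_gt (k+1) i with h | h
        · rw [pa (k+1) h]
        rcases le_or_gt (k+1) j with h2 | h2
        · rw [pb (k+1) h h2]; omega
        · rw [pc (k+1) h2]
      omega
    · have h1 := pb (i+1) (by omega) (by omega)
      have h2 := hstrict i le_rfl hij
      omega
  exact ⟨i, j, d₁, hij, hjN, hd1j, hdji, hd₁, hant1, hsupp1, hdom1, hNeq1, hlt⟩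

theorem chain_lemma (N : ℕ) (L : Finset (ℕ ⊕ ℕ)) (emb : ℕ → ℕ ⊕ ℕ)
    (hembinj : Function.Injective emb)
    (hsd : ∀ k l : ℕ, (emb k).isLeft = (emb l).isLeft)
    (hembL : ∀ k, k < N → emb k ∈ L)
    (C : (ℕ → ℕ) → (ℕ ⊕ ℕ) → ℕ)
    (hCemb : ∀ d k, C d (emb k) = d k)
    (hCout : ∀ d₁ d₂ w, (∀ k, emb k ≠ w) → C d₁ w = C d₂ w)
    (hCL : ∀ d, (∀ k, N ≤ k → d k = 0) → ∀ w, C d w ≠ 0 → w ∈ L)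
    (d' : ℕ → ℕ) (hd'ant : Antitone d') (hd'supp : ∀ k, N ≤ k → d' k = 0) :
    ∀ m (d : ℕ → ℕ), Antitone d → (∀ k, N ≤ k → d k = 0) →
      (∀ k, psum d k ≤ psum d' k) → psum d N = psum d' N →
      (∑ k ∈ Finset.range N, (psum d' (k+1) - psum d (k+1))) ≤ m →
      ∀ Y : Set (Wr G n), IsTransitiveOn tabAct (TabSet G n (C d)) Y →
        IsTransitiveOn tabAct (TabSet G n (C d')) Y := by
  intro m
  induction m with
  | zero =>
    intro d hant hsupp hdom hNeq hm Y hY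
    by_cases hdd : d = d'
    · subst hdd; exact hY
    · exfalso
      obtain ⟨i, j, d₁, hij, hjN, hdj1, hdji, hd₁, hant1, hsupp1, hdom1, hNeq1, hlt⟩ :=
        exists_move N d d' hant hd'ant hsupp hd'supp hdom hNeq hdd
      omega
  | succ m IH =>
    intro d hant hsupp hdom hNeq hm Y hY
    by_cases hdd : d = d'
    · subst hdd; exact hY
    obtain ⟨i, j, d₁, hij, hjN, hdj1, hdji, hd₁, hant1, hsupp1, hdom1, hNeq1, hlt⟩ :=
      exists_move N d d' hant hd'ant hsupp hd'supp hdom hNeq hdd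
    have hd₁i : d₁ i = d i + 1 := by
      rw [hd₁, Function.update_of_ne (by omega : i ≠ j), Function.update_self]
    have hd₁j : d₁ j = d j - 1 := by rw [hd₁, Function.update_self]
    have hd₁k : ∀ k, k ≠ i → k ≠ j → d₁ k = d k := by
      intro k hki hkj
      rw [hd₁, Function.update_of_ne hkj, Function.update_of_ne hki]
    have hstep : IsTransitiveOn tabAct (TabSet G n (C d₁)) Y := by
      refine step_lemma L (C d₁) (emb i) (emb j) ?_ (hsd i j) ?_ ?_
        (hembL i (by omega)) (hembL j hjN) Y ?_
      · intro h
        exact absurd (hembinj h) (by omega)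
      · rw [hCemb, hCemb, hd₁i, hd₁j]
        omega
      · intro w hw
        refine hCL d₁ ?_ w hw
        intro k hk
        rw [hd₁k k (by omega) (by omega)]
        exact hsupp k hk
      · have hshape : Function.update
            (Function.update (C d₁) (emb i) (C d₁ (emb i) - 1)) (emb j)
            (C d₁ (emb j) + 1) = C d := by
          funext w
          by_cases hwj : w = emb j
          · subst hwj
            rw [Function.update_self, hCemb, hCemb, hd₁j]
            omega
          rw [Function.update_of_ne hwj]
          by_cases hwi : w = emb i
          · subst hwi
            rw [Function.update_self, hCemb, hCemb, hd₁i]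
            omega
          · rw [Function.update_of_ne hwi]
            by_cases hw : ∃ t, emb t = w
            · obtain ⟨t, rfl⟩ := hw
              have hti : t ≠ i := fun h => hwi (by rw [h])
              have htj : t ≠ j := fun h => hwj (by rw [h])
              rw [hCemb, hCemb, hd₁k t hti htj]
            · push_neg at hw
              exact hCout d₁ d w hw
        rw [hshape]
        exact hY
    exact IH d₁ hant1 hsupp1 hdom1 hNeq1 (by omega) Y hstep

/-! ### Bridging multisets and part functions -/

lemma list_getD_psum (l : List ℕ) (k : ℕ) :
    psum (fun t => l.getD t 0) k = (l.take k).sum := by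
  induction k with
  | zero => simp [psum]
  | succ k ih =>
    rw [psum_succ, ih, List.take_succ, List.sum_append]
    congr 1
    rcases lt_or_ge k l.length with h | h
    · rw [List.getD_eq_getElem _ _ h, List.getElem?_eq_getElem h]
      simp
    · rw [List.getD_eq_default _ _ h, List.getElem?_eq_none h]
      simp

lemma dparts_psum (s : Multiset ℕ) (k : ℕ) :
    psum (dparts s) k = (((s.sort (· ≤ ·)).reverse).take k).sum :=
  list_getD_psum _ k

lemma dparts_antitone (s : Multiset ℕ) : Antitone (dparts s) := by
  intro a b hab
  unfold dparts
  set l := (s.sort (· ≤ ·)).reverse with hl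
  have hsorted : l.Pairwise (fun x y => y ≤ x) := by
    rw [hl]
    exact (List.pairwise_reverse).2 (Multiset.pairwise_sort s (· ≤ ·))
  rcases lt_or_ge b l.length with hb | hb
  · have ha : a < l.length := lt_of_le_of_lt hab hb
    rw [List.getD_eq_getElem _ _ ha, List.getD_eq_getElem _ _ hb]
    rcases eq_or_lt_of_le hab with rfl | hlt
    · exact le_refl _
    · exact hsorted.rel_get_of_lt (a := ⟨a, ha⟩) (b := ⟨b, hb⟩) hlt
  · rw [List.getD_eq_default _ _ hb]
    exact Nat.zero_le _

lemma multiset_card_le_sum (s : Multiset ℕ) (h : 0 ∉ s) : Multiset.card s ≤ s.sum := by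
  induction s using Multiset.induction with
  | empty => simp
  | cons a t ih =>
    simp only [Multiset.card_cons, Multiset.sum_cons]
    have ha : a ≠ 0 := fun h0 => h (h0 ▸ Multiset.mem_cons_self a t)
    have ht := ih (fun h0 => h (Multiset.mem_cons_of_mem h0))
    omega

lemma dparts_supp (s : Multiset ℕ) (N : ℕ) (h : Multiset.card s ≤ N) :
    ∀ k, N ≤ k → dparts s k = 0 := by
  intro k hk
  unfold dparts
  refine List.getD_eq_default _ _ ?_
  rw [List.length_reverse, Multiset.length_sort]
  omega

lemma dparts_total (s : Multiset ℕ) (N : ℕ) (h : Multiset.card s ≤ N) :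
    psum (dparts s) N = s.sum := by
  rw [dparts_psum]
  rw [List.take_of_length_le (by rw [List.length_reverse, Multiset.length_sort]; omega)]
  rw [List.sum_reverse]
  conv_rhs => rw [← Multiset.sort_eq s (· ≤ ·)]
  rfl

theorem dominance_rule' (n : ℕ) (σ ρ τ π : Multiset ℕ)
    (hσ0 : 0 ∉ σ) (hρ0 : 0 ∉ ρ) (hτ0 : 0 ∉ τ) (hπ0 : 0 ∉ π)
    (hn1 : σ.sum + ρ.sum = n) (hn2 : τ.sum + π.sum = n)
    (hsize : σ.sum = τ.sum) (h1 : msDom σ τ) (h2 : msDom ρ π) :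
    DPDom G n σ ρ τ π := by
  intro Y hY
  have hbridge : ∀ (σ' ρ' : Multiset ℕ),
      {T : Tb G n | IsTabloid G n σ' ρ' T} = TabSet G n (Sum.elim (dparts σ') (dparts ρ')) := by
    intro σ' ρ'
    ext T
    exact isTabloid_iff σ' ρ' T
  unfold DPTransitive at hY ⊢
  rw [hbridge] at hY
  rw [hbridge]
  set L : Finset (ℕ ⊕ ℕ) :=
    ((Finset.range n).image Sum.inl) ∪ ((Finset.range n).image Sum.inr) with hL
  have hσcard : Multiset.card σ ≤ n := le_trans (multiset_card_le_sum σ hσ0) (by omega)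
  have hρcard : Multiset.card ρ ≤ n := le_trans (multiset_card_le_sum ρ hρ0) (by omega)
  have hτcard : Multiset.card τ ≤ n := le_trans (multiset_card_le_sum τ hτ0) (by omega)
  have hπcard : Multiset.card π ≤ n := le_trans (multiset_card_le_sum π hπ0) (by omega)
  have hρπ : ρ.sum = π.sum := by omega
  have hmemL : ∀ k, k < n → Sum.inl k ∈ L ∧ Sum.inr k ∈ L := by
    intro k hk
    constructor
    · rw [hL]
      exact Finset.mem_union_left _ (Finset.mem_image.2 ⟨k, Finset.mem_range.2 hk, rfl⟩)
    · rw [hL]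
      exact Finset.mem_union_right _ (Finset.mem_image.2 ⟨k, Finset.mem_range.2 hk, rfl⟩)
  have hsupple : ∀ (e : ℕ → ℕ), (∀ k, n ≤ k → e k = 0) → ∀ k, e k ≠ 0 → k < n := by
    intro e he k hk
    by_contra h
    exact hk (he k (by omega))
  have step1 : IsTransitiveOn tabAct
      (TabSet G n (Sum.elim (dparts τ) (dparts ρ))) Y := by
    refine chain_lemma n L Sum.inl Sum.inl_injective (fun _ _ => rfl)
      (fun k hk => (hmemL k hk).1)
      (fun d => Sum.elim d (dparts ρ)) (fun _ _ => rfl) ?_ ?_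
      (dparts τ) (dparts_antitone τ) (dparts_supp τ n hτcard)
      _ (dparts σ) (dparts_antitone σ) (dparts_supp σ n hσcard) ?_ ?_ le_rfl Y hY
    · intro d₁ d₂ w hw
      cases w with
      | inl k => exact absurd rfl (hw k)
      | inr k => rfl
    · intro d hd w hw
      cases w with
      | inl k => exact (hmemL k (hsupple d hd k hw)).1
      | inr k =>
        exact (hmemL k (hsupple (dparts ρ) (dparts_supp ρ n hρcard) k hw)).2
    · intro k
      rw [dparts_psum, dparts_psum]
      exact h1 k
    · rw [dparts_total σ n hσcard, dparts_total τ n hτcard]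
      exact hsize
  refine chain_lemma n L Sum.inr Sum.inr_injective (fun _ _ => rfl)
    (fun k hk => (hmemL k hk).2)
    (fun e => Sum.elim (dparts τ) e) (fun _ _ => rfl) ?_ ?_
    (dparts π) (dparts_antitone π) (dparts_supp π n hπcard)
    _ (dparts ρ) (dparts_antitone ρ) (dparts_supp ρ n hρcard) ?_ ?_ le_rfl Y step1
  · intro d₁ d₂ w hw
    cases w with
    | inl k => rfl
    | inr k => exact absurd rfl (hw k)
  · intro e he w hw
    cases w with
    | inl k => exact (hmemL k (hsupple (dparts τ) (dparts_supp τ n hτcard) k hw)).1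
    | inr k => exact (hmemL k (hsupple e he k hw)).2
  · intro k
    rw [dparts_psum, dparts_psum]
    exact h2 k
  · rw [dparts_total ρ n hρcard, dparts_total π n hπcard]
    exact hρπ

end Aux


/-- **Dominance rule.**
Let `G` be a nontrivial finite abelian group and let `(σ,ρ)` and `(τ,π)` be double
partitions of `n ≥ 1` with `|σ| = |τ|`, `σ ⊴ τ` and `ρ ⊴ π`.
Then `(σ,ρ) ≽_G (τ,π)`, i.e. every `(σ,ρ)`-transitive subset of `G ≀ Sₙ`
is also `(τ,π)`-transitive. -/
theorem dominance_rule (G : Type) [CommGroup G] [Fintype G] [Nontrivial G]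
    (n : ℕ) (hn : 1 ≤ n) (σ ρ τ π : Multiset ℕ)
    (hσ0 : 0 ∉ σ) (hρ0 : 0 ∉ ρ) (hτ0 : 0 ∉ τ) (hπ0 : 0 ∉ π)
    (hn1 : σ.sum + ρ.sum = n) (hn2 : τ.sum + π.sum = n)
    (hsize : σ.sum = τ.sum) (h1 : msDom σ τ) (h2 : msDom ρ π) :
    DPDom G n σ ρ τ π :=
  dominance_rule' n σ ρ τ π hσ0 hρ0 hτ0 hπ0 hn1 hn2 hsize h1 h2
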